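/- Let A and B be positive definite complex n×n matrices, let α, β ∈ [0,1], and let f : (0,∞) → (0,∞) be a continuous operator log-convex function. Then f(A ∇_α B) ≤ f((A ∇_α B) ∇_β A) ♯_α f((A ∇_α B) ∇_β B) ≤ f(A) ♯_α f(B) in the Loewner order. -/

import Mathlib

open Matrix ComplexOrder Topology

/-- Real power of a matrix via the continuous functional calculus
(for a positive definite matrix this is the usual functional-calculus power). -/
noncomputable def mpow {n : ℕ} (A : Matrix (Fin n) (Fin n) ℂ) (t : ℝ) :
    Matrix (Fin n) (Fin n) ℂ :=
  cfc (fun x : ℝ => x ^ t) A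

/-- The weighted geometric mean `A ♯ₜ B = A^{1/2} (A^{-1/2} B A^{-1/2})^t A^{1/2}`. -/
noncomputable def gm {n : ℕ} (t : ℝ) (A B : Matrix (Fin n) (Fin n) ℂ) :
    Matrix (Fin n) (Fin n) ℂ :=
  mpow A (1/2) * mpow (mpow A (-(1/2)) * B * mpow A (-(1/2))) t * mpow A (1/2)

/-- The weighted arithmetic mean `A ∇ₜ B = (1-t)A + tB`. -/
noncomputable def am {n : ℕ} (t : ℝ) (A B : Matrix (Fin n) (Fin n) ℂ) :
    Matrix (Fin n) (Fin n) ℂ :=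
  (1 - t) • A + t • B

/-- The weighted harmonic mean `A !ₜ B = ((1-t)A⁻¹ + tB⁻¹)⁻¹`. -/
noncomputable def hm {n : ℕ} (t : ℝ) (A B : Matrix (Fin n) (Fin n) ℂ) :
    Matrix (Fin n) (Fin n) ℂ :=
  ((1 - t) • A⁻¹ + t • B⁻¹)⁻¹

/-- The Loewner order: `X ≤ Y` iff `Y - X` is positive semidefinite. -/
noncomputable def loewnerLE {n : ℕ} (X Y : Matrix (Fin n) (Fin n) ℂ) : Prop :=
  (Y - X).PosSemidef

namespace LogCvxAux
variable {n : ℕ}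
variable {A B X X' Y Y' Z M N : Matrix (Fin n) (Fin n) ℂ}


lemma contOn (f : ℝ → ℝ) (A : Matrix (Fin n) (Fin n) ℂ) : ContinuousOn f (spectrum ℝ A) :=
  (Matrix.finite_real_spectrum (A := A)).continuousOn f

lemma spec_pos {A : Matrix (Fin n) (Fin n) ℂ} (hA : A.PosDef) : ∀ x ∈ spectrum ℝ A, 0 < x := by
  intro x hx
  rw [hA.isHermitian.spectrum_real_eq_range_eigenvalues] at hx
  obtain ⟨i, rfl⟩ := hx
  exact hA.eigenvalues_pos i

lemma posDef_conj {A : Matrix (Fin n) (Fin n) ℂ} (hA : A.PosDef)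
    {S : Matrix (Fin n) (Fin n) ℂ} (hS : IsUnit S) : (S * A * Sᴴ).PosDef := by
  refine Matrix.PosDef.of_dotProduct_mulVec_pos (by simpa using isHermitian_conjTranspose_mul_mul Sᴴ hA.1) fun x hx => ?_
  have hx' : Sᴴ *ᵥ x ≠ 0 := by
    intro h
    apply hx
    have hSH : IsUnit Sᴴ := (Matrix.isUnit_conjTranspose S).mpr hS
    have := congrArg (fun v => (Sᴴ)⁻¹ *ᵥ v) h
    simpa [Matrix.mulVec_mulVec, Matrix.nonsing_inv_mul _
      ((Matrix.isUnit_iff_isUnit_det _).mp hSH), Matrix.mulVec_zero] using this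
  rw [show S * A * Sᴴ = (Sᴴ)ᴴ * A * Sᴴ by simp]
  simpa only [star_mulVec, dotProduct_mulVec, vecMul_vecMul] using hA.dotProduct_mulVec_pos hx'

lemma unitary_isUnit {W : Matrix (Fin n) (Fin n) ℂ} (hW : W ∈ unitary (Matrix (Fin n) (Fin n) ℂ)) :
    IsUnit W :=
  (Unitary.toUnits ⟨W, hW⟩).isUnit

lemma eigenvectorUnitary_mem {A : Matrix (Fin n) (Fin n) ℂ} (hA : A.IsHermitian) :
    (hA.eigenvectorUnitary : Matrix (Fin n) (Fin n) ℂ) ∈ unitary (Matrix (Fin n) (Fin n) ℂ) :=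
  SetLike.coe_mem _

lemma cfc_posDef {A : Matrix (Fin n) (Fin n) ℂ} (hA : A.PosDef) (f : ℝ → ℝ)
    (hf : ∀ x ∈ spectrum ℝ A, 0 < f x) : (cfc f A).PosDef := by
  rw [hA.isHermitian.cfc_eq, Matrix.IsHermitian.cfc]
  have hd : (Matrix.diagonal (RCLike.ofReal ∘ f ∘ hA.isHermitian.eigenvalues)
      : Matrix (Fin n) (Fin n) ℂ).PosDef := by
    rw [Matrix.posDef_diagonal_iff]
    intro i
    have := hf _ (hA.isHermitian.eigenvalues_mem_spectrum_real i)
    exact RCLike.ofReal_pos.mpr this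
  rw [Unitary.conjStarAlgAut_apply, Matrix.star_eq_conjTranspose]
  exact posDef_conj hd (unitary_isUnit (eigenvectorUnitary_mem hA.isHermitian))

lemma cfc_posSemidef {A : Matrix (Fin n) (Fin n) ℂ} (hA : A.IsHermitian) (f : ℝ → ℝ)
    (hf : ∀ x ∈ spectrum ℝ A, 0 ≤ f x) : (cfc f A).PosSemidef := by
  rw [hA.cfc_eq, Matrix.IsHermitian.cfc]
  have hd : (Matrix.diagonal (RCLike.ofReal ∘ f ∘ hA.eigenvalues)
      : Matrix (Fin n) (Fin n) ℂ).PosSemidef := by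
    rw [Matrix.posSemidef_diagonal_iff]
    intro i
    have := hf _ (hA.eigenvalues_mem_spectrum_real i)
    exact RCLike.ofReal_nonneg.mpr this
  rw [Unitary.conjStarAlgAut_apply, Matrix.star_eq_conjTranspose]
  exact hd.mul_mul_conjTranspose_same _




lemma mpow_posDef (hA : A.PosDef) (t : ℝ) : (mpow A t).PosDef :=
  cfc_posDef hA _ (fun x hx => Real.rpow_pos_of_pos (spec_pos hA x hx) t)

lemma mpow_herm (hA : A.PosDef) (t : ℝ) : (mpow A t)ᴴ = mpow A t :=
  (mpow_posDef hA t).isHermitian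

lemma mpow_add (hA : A.PosDef) (s u : ℝ) : mpow A s * mpow A u = mpow A (s + u) := by
  have ha : IsSelfAdjoint A := hA.isHermitian
  rw [mpow, mpow, mpow, ← cfc_mul _ _ A (contOn _ _) (contOn _ _)]
  exact cfc_congr (fun x hx => (Real.rpow_add (spec_pos hA x hx) s u).symm)

lemma mpow_zero (hA : A.PosDef) : mpow A 0 = 1 := by
  have ha : IsSelfAdjoint A := hA.isHermitian
  rw [mpow]
  have : (fun x : ℝ => x ^ (0:ℝ)) = fun _ => (1:ℝ) := by
    funext x; exact Real.rpow_zero x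
  rw [this, cfc_const 1 A ha, _root_.map_one]

lemma mpow_one (hA : A.PosDef) : mpow A 1 = A := by
  have ha : IsSelfAdjoint A := hA.isHermitian
  rw [mpow]
  have : (fun x : ℝ => x ^ (1:ℝ)) = fun x => x := by
    funext x; exact Real.rpow_one x
  rw [this]
  exact cfc_id ℝ A ha

lemma mpow_neg_eq_inv (hA : A.PosDef) (t : ℝ) : (mpow A t)⁻¹ = mpow A (-t) := by
  apply Matrix.inv_eq_left_inv
  rw [mpow_add hA, neg_add_cancel, mpow_zero hA]

lemma mpow_mpow (hA : A.PosDef) (s t : ℝ) : mpow (mpow A s) t = mpow A (s * t) := by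
  have ha : IsSelfAdjoint A := hA.isHermitian
  rw [mpow, mpow, mpow, ← cfc_comp (fun x : ℝ => x ^ t) (fun x : ℝ => x ^ s) A ha
    (((Matrix.finite_real_spectrum (A := A)).image _).continuousOn _) (contOn _ _)]
  exact cfc_congr (fun x hx => by
    simp only [Function.comp_apply]
    exact (Real.rpow_mul (spec_pos hA x hx).le s t).symm ▸ rfl)



variable {W : Matrix (Fin n) (Fin n) ℂ} (hW : W ∈ unitary (Matrix (Fin n) (Fin n) ℂ))
  (d : Fin n → ℝ)

lemma star_diag_real : star (diagonal (RCLike.ofReal ∘ d) : Matrix (Fin n) (Fin n) ℂ)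
    = diagonal (RCLike.ofReal ∘ d) := by
  rw [Matrix.star_eq_conjTranspose, Matrix.diagonal_conjTranspose]
  have : star (RCLike.ofReal ∘ d : Fin n → ℂ) = RCLike.ofReal ∘ d := by
    funext i; simp [Function.comp]
  rw [this]

lemma diag_conj_selfAdjoint :
    _root_.IsSelfAdjoint (W * diagonal (RCLike.ofReal ∘ d) * star W) := by
  have : star (W * diagonal (RCLike.ofReal ∘ d) * star W)
      = W * diagonal (RCLike.ofReal ∘ d) * star W := by
    rw [StarMul.star_mul, StarMul.star_mul, star_star, star_diag_real, mul_assoc]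
  exact this

include hW in
lemma diag_conj_spectrum :
    spectrum ℝ (W * diagonal (RCLike.ofReal ∘ d) * star W) = Set.range d := by
  ext x
  have : W * diagonal (RCLike.ofReal ∘ d) * star W
      = ((⟨W, hW⟩ : unitary (Matrix (Fin n) (Fin n) ℂ)) : Matrix (Fin n) (Fin n) ℂ)
        * diagonal (RCLike.ofReal ∘ d)
        * star ((⟨W, hW⟩ : unitary (Matrix (Fin n) (Fin n) ℂ)) : Matrix (Fin n) (Fin n) ℂ) := rfl
  rw [this, Unitary.spectrum_star_right_conjugate, ← spectrum.algebraMap_mem_iff ℂ,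
    _root_.spectrum_diagonal, RCLike.algebraMap_eq_ofReal]
  simp

include hW in
lemma cfc_diag_conj (f : ℝ → ℝ) :
    cfc f (W * diagonal (RCLike.ofReal ∘ d) * star W)
      = W * diagonal (RCLike.ofReal ∘ f ∘ d) * star W := by
  have ha : _root_.IsSelfAdjoint (W * diagonal (RCLike.ofReal ∘ d) * star W) :=
    diag_conj_selfAdjoint d
  have hspec : spectrum ℝ (W * diagonal (RCLike.ofReal ∘ d) * star W) = Set.range d :=
    diag_conj_spectrum hW d
  have hmem : ∀ i, d i ∈ spectrum ℝ (W * diagonal (RCLike.ofReal ∘ d) * star W) :=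
    fun i => by rw [hspec]; exact Set.mem_range_self i
  have hWW : W * star W = 1 := Unitary.mul_star_self_of_mem hW
  have hWW' : star W * W = 1 := Unitary.star_mul_self_of_mem hW
  set A := W * diagonal (RCLike.ofReal ∘ d) * star W with hA
  let φ : C(spectrum ℝ A, ℝ) →⋆ₐ[ℝ] Matrix (Fin n) (Fin n) ℂ :=
  { toFun := fun g => W * diagonal (RCLike.ofReal ∘ g ∘ (fun i => ⟨d i, hmem i⟩)) * star W
    map_one' := by simp [Pi.one_def (M := fun _ : Fin n ↦ ℂ), hWW]
    map_mul' := fun f g => by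
      have key {a b c d' e f : Matrix (Fin n) (Fin n) ℂ} :
          (a * b * c) * (d' * e * f) = a * (b * (c * d') * e) * f := by
        simp only [mul_assoc]
      simp only [key, ContinuousMap.coe_mul, hWW', mul_one,
        diagonal_mul_diagonal, Function.comp_apply]
      congr! with i
      simp
    map_zero' := by simp [Pi.zero_def (M := fun _ : Fin n ↦ ℂ)]
    map_add' := fun f g => by
      simp only [ContinuousMap.coe_add, ← add_mul, ← mul_add, diagonal_add, Function.comp_apply]
      congr! with i
      simp
    commutes' := fun r => by
      simp only [Function.comp_def, algebraMap_apply, smul_eq_mul, mul_one]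
      rw [← mul_one (algebraMap _ _ _), ← hWW, ← Algebra.left_comm, mul_assoc]
      have halg : (algebraMap ℝ (Matrix (Fin n) (Fin n) ℂ)) r
          = diagonal (fun _ : Fin n => (r : ℂ)) := by
        rw [Matrix.algebraMap_eq_diagonal]
        exact congrArg diagonal (funext fun i => by simp)
      rw [halg]
      rfl
    map_star' := fun f => by
      simp only [star_trivial, StarMul.star_mul, star_star, star_eq_conjTranspose (diagonal _),
        diagonal_conjTranspose, mul_assoc]
      congr!
      ext
      simp }
  have hφcont : IsClosedEmbedding φ := by
    have h0 : FiniteDimensional ℝ C(spectrum ℝ A, ℝ) :=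
      FiniteDimensional.of_injective (ContinuousMap.coeFnLinearMap ℝ (M := ℝ))
        DFunLike.coe_injective
    refine LinearMap.isClosedEmbedding_of_injective (𝕜 := ℝ) (E := C(spectrum ℝ A, ℝ))
      (F := Matrix (Fin n) (Fin n) ℂ) (f := φ) <| LinearMap.ker_eq_bot'.mpr fun g hg ↦ ?_
    have h2 : diagonal (RCLike.ofReal ∘ g ∘ (fun i => (⟨d i, hmem i⟩ : spectrum ℝ A)))
        = (0 : Matrix (Fin n) (Fin n) ℂ) := by
      simp only [LinearMap.coe_coe] at hg
      change W * _ * star W = 0 at hg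
      replace hg := congr($(hg) * W)
      simp only [mul_assoc, hWW', mul_one, zero_mul] at hg
      simpa [← mul_assoc, hWW'] using congr(star W * $(hg))
    ext x
    simp only [ContinuousMap.zero_apply]
    obtain ⟨x, hx⟩ := x
    obtain ⟨i, rfl⟩ := hspec ▸ hx
    rw [← diagonal_zero] at h2
    have := (diagonal_eq_diagonal_iff).mp h2
    exact RCLike.ofReal_eq_zero.mp (this i)
  have hφid : φ (ContinuousMap.restrict (spectrum ℝ A) (ContinuousMap.id ℝ)) = A := by
    show W * _ * star W = W * diagonal (RCLike.ofReal ∘ d) * star W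
    congr!
  have hHom := cfcHom_eq_of_continuous_of_map_id ha φ hφcont.continuous hφid
  rw [cfc_apply f A ha ((Matrix.finite_real_spectrum (A := A)).continuousOn f), hHom]
  rfl



lemma cfc_conj_unitary (f : ℝ → ℝ) {A V : Matrix (Fin n) (Fin n) ℂ}
    (hA : A.IsHermitian) (hV : V ∈ unitary (Matrix (Fin n) (Fin n) ℂ)) :
    cfc f (V * A * star V) = V * cfc f A * star V := by
  have hW : (hA.eigenvectorUnitary : Matrix (Fin n) (Fin n) ℂ)
      ∈ unitary (Matrix (Fin n) (Fin n) ℂ) := SetLike.coe_mem _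
  have hVW : V * (hA.eigenvectorUnitary : Matrix (Fin n) (Fin n) ℂ)
      ∈ unitary (Matrix (Fin n) (Fin n) ℂ) := mul_mem hV hW
  conv_lhs => rw [hA.spectral_theorem, Unitary.conjStarAlgAut_apply]
  conv_rhs => rw [hA.spectral_theorem, Unitary.conjStarAlgAut_apply]
  have h1 : V * ((hA.eigenvectorUnitary : Matrix (Fin n) (Fin n) ℂ)
        * diagonal (RCLike.ofReal ∘ hA.eigenvalues)
        * star (hA.eigenvectorUnitary : Matrix (Fin n) (Fin n) ℂ)) * star V
      = (V * (hA.eigenvectorUnitary : Matrix (Fin n) (Fin n) ℂ))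
        * diagonal (RCLike.ofReal ∘ hA.eigenvalues)
        * star (V * (hA.eigenvectorUnitary : Matrix (Fin n) (Fin n) ℂ)) := by
    rw [StarMul.star_mul]
    noncomm_ring
  rw [h1, cfc_diag_conj hVW, cfc_diag_conj hW]
  rw [StarMul.star_mul]
  noncomm_ring

lemma mpow_conj_unitary (t : ℝ) {M V : Matrix (Fin n) (Fin n) ℂ}
    (hM : M.IsHermitian) (hV : V ∈ unitary (Matrix (Fin n) (Fin n) ℂ)) :
    mpow (V * M * star V) t = V * mpow M t * star V :=
  cfc_conj_unitary _ hM hV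

theorem gm_conj (t : ℝ) {A B S : Matrix (Fin n) (Fin n) ℂ}
    (hA : A.PosDef) (hB : B.PosDef) (hS : IsUnit S) :
    gm t (S * A * Sᴴ) (S * B * Sᴴ) = S * gm t A B * Sᴴ := by
  classical
  have hSd : IsUnit S.det := (Matrix.isUnit_iff_isUnit_det _).mp hS
  have hSH : IsUnit Sᴴ := (Matrix.isUnit_conjTranspose S).mpr hS
  have hSHd : IsUnit (Sᴴ).det := (Matrix.isUnit_iff_isUnit_det _).mp hSH
  set Ah := mpow A (1/2) with hAh
  have hAhP : Ah.PosDef := mpow_posDef hA _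
  have hAhH : Ahᴴ = Ah := hAhP.isHermitian
  have hAhd : IsUnit Ah.det := (Matrix.isUnit_iff_isUnit_det _).mp hAhP.isUnit
  set A' := S * A * Sᴴ with hA'
  have hA'P : A'.PosDef := posDef_conj hA hS
  set P := mpow A' (1/2) with hP
  have hPP : P.PosDef := mpow_posDef hA'P _
  have hPH : Pᴴ = P := hPP.isHermitian
  have hPd : IsUnit P.det := (Matrix.isUnit_iff_isUnit_det _).mp hPP.isUnit
  have hPsq : P * P = A' := by
    rw [hP, mpow_add hA'P]; norm_num; exact mpow_one hA'P
  set T := S * Ah with hT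
  have hTd : IsUnit T.det := by
    rw [hT, Matrix.det_mul]; exact hSd.mul hAhd
  have hTT : T * Tᴴ = A' := by
    rw [hT, Matrix.conjTranspose_mul, hAhH, hA']
    calc S * Ah * (Ah * Sᴴ) = S * (Ah * Ah) * Sᴴ := by noncomm_ring
    _ = S * A * Sᴴ := by rw [hAh, mpow_add hA]; norm_num; rw [mpow_one hA]
  set V := P⁻¹ * T with hV
  have hPinvH : (P⁻¹)ᴴ = P⁻¹ := by rw [Matrix.conjTranspose_nonsing_inv, hPH]
  have hVVH : V * Vᴴ = 1 := by
    rw [hV, Matrix.conjTranspose_mul, hPinvH]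
    calc P⁻¹ * T * (Tᴴ * P⁻¹) = P⁻¹ * (T * Tᴴ) * P⁻¹ := by noncomm_ring
    _ = P⁻¹ * (P * P) * P⁻¹ := by rw [hTT, hPsq]
    _ = (P⁻¹ * P) * (P * P⁻¹) := by noncomm_ring
    _ = 1 := by rw [Matrix.nonsing_inv_mul _ hPd, Matrix.mul_nonsing_inv _ hPd, one_mul]
  have hVHV : Vᴴ * V = 1 := mul_eq_one_comm.mp hVVH
  have hVmem : V ∈ unitary (Matrix (Fin n) (Fin n) ℂ) := by
    rw [Unitary.mem_iff, Matrix.star_eq_conjTranspose]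
    exact ⟨hVHV, hVVH⟩
  have hPV : P * V = T := by
    rw [hV, ← mul_assoc, Matrix.mul_nonsing_inv _ hPd, one_mul]
  have hPinv : P⁻¹ = V * T⁻¹ := by
    rw [hV, mul_assoc, Matrix.mul_nonsing_inv _ hTd, mul_one]
  have hPinv2 : P⁻¹ = (Tᴴ)⁻¹ * Vᴴ := by
    conv_lhs => rw [← hPinvH, hPinv]
    rw [Matrix.conjTranspose_mul, Matrix.conjTranspose_nonsing_inv]
  set M := mpow A (-(1/2)) * B * mpow A (-(1/2)) with hM
  have hAhinv : Ah⁻¹ = mpow A (-(1/2)) := by rw [hAh, mpow_neg_eq_inv hA]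
  have hAhinvU : IsUnit Ah⁻¹ := hAhP.inv.isUnit
  have hAhinvH : (Ah⁻¹)ᴴ = Ah⁻¹ := by rw [Matrix.conjTranspose_nonsing_inv, hAhH]
  have hMP : M.PosDef := by
    have h9 : Ah⁻¹ * B * Ah⁻¹ = Ah⁻¹ * B * (Ah⁻¹)ᴴ := by rw [hAhinvH]
    rw [hM, ← hAhinv, h9]
    exact posDef_conj hB hAhinvU
  have hTinv : T⁻¹ = mpow A (-(1/2)) * S⁻¹ := by
    rw [hT, Matrix.mul_inv_rev, hAhinv]
  have hTHinv : (Tᴴ)⁻¹ = (Sᴴ)⁻¹ * mpow A (-(1/2)) := by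
    rw [← Matrix.conjTranspose_nonsing_inv, hTinv, Matrix.conjTranspose_mul,
      Matrix.conjTranspose_nonsing_inv]
    congr 1
    rw [← hAhinv, Matrix.conjTranspose_nonsing_inv, hAhH]
  have hinner : P⁻¹ * (S * B * Sᴴ) * P⁻¹ = V * M * Vᴴ := by
    have h8 : P⁻¹ * (S * B * Sᴴ) * P⁻¹ = (V * T⁻¹) * (S * B * Sᴴ) * ((Tᴴ)⁻¹ * Vᴴ) := by
      rw [← hPinv, ← hPinv2]
    rw [h8]
    calc V * T⁻¹ * (S * B * Sᴴ) * ((Tᴴ)⁻¹ * Vᴴ)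
        = V * (T⁻¹ * S * B * (Sᴴ * (Tᴴ)⁻¹)) * Vᴴ := by noncomm_ring
    _ = V * M * Vᴴ := by
        rw [hTinv, hTHinv]
        congr 2
        calc mpow A (-(1/2)) * S⁻¹ * S * B * (Sᴴ * ((Sᴴ)⁻¹ * mpow A (-(1/2))))
            = mpow A (-(1/2)) * (S⁻¹ * S) * B * ((Sᴴ * (Sᴴ)⁻¹) * mpow A (-(1/2))) := by
              noncomm_ring
        _ = M := by
            rw [Matrix.nonsing_inv_mul _ hSd, Matrix.mul_nonsing_inv _ hSHd, hM]
            noncomm_ring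
  have hgm : gm t A' (S * B * Sᴴ)
      = P * mpow (P⁻¹ * (S * B * Sᴴ) * P⁻¹) t * P := by
    rw [gm, ← mpow_neg_eq_inv hA'P (1/2), ← hP]
  rw [hgm, hinner, ← Matrix.star_eq_conjTranspose V,
    mpow_conj_unitary t hMP.isHermitian hVmem, Matrix.star_eq_conjTranspose]
  have hVHP : Vᴴ * P = Tᴴ := by
    rw [← hPH, ← Matrix.conjTranspose_mul, hPV]
  calc P * (V * mpow M t * Vᴴ) * P = (P * V) * mpow M t * (Vᴴ * P) := by noncomm_ring
  _ = T * mpow M t * Tᴴ := by rw [hPV, hVHP]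
  _ = S * (Ah * mpow M t * Ah) * Sᴴ := by
      rw [hT, Matrix.conjTranspose_mul, hAhH]; noncomm_ring
  _ = S * gm t A B * Sᴴ := by rw [gm, ← hAh, ← hM]




lemma inner_posDef (hA : A.PosDef) (hB : B.PosDef) :
    (mpow A (-(1/2)) * B * mpow A (-(1/2))).PosDef := by
  have h9 : mpow A (-(1/2)) * B * mpow A (-(1/2))
      = mpow A (-(1/2)) * B * (mpow A (-(1/2)))ᴴ := by rw [mpow_herm hA]
  rw [h9]
  exact posDef_conj hB (mpow_posDef hA _).isUnit

lemma gm_posDef (t : ℝ) (hA : A.PosDef) (hB : B.PosDef) : (gm t A B).PosDef := by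
  have h9 : gm t A B = mpow A (1/2) * mpow (mpow A (-(1/2)) * B * mpow A (-(1/2))) t
      * (mpow A (1/2))ᴴ := by rw [mpow_herm hA]; rfl
  rw [h9]
  exact posDef_conj (mpow_posDef (inner_posDef hA hB) t) (mpow_posDef hA _).isUnit

lemma gm_mpow (hM : M.PosDef) (s u t v : ℝ) (hv : v = (1-t)*s + t*u) :
    gm t (mpow M s) (mpow M u) = mpow M v := by
  rw [gm, mpow_mpow hM s (1/2), mpow_mpow hM s (-(1/2)), mpow_add hM, mpow_add hM,
    mpow_mpow hM, mpow_add hM, mpow_add hM]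
  congr 1
  rw [hv]; ring

lemma gm_zero (hA : A.PosDef) (hB : B.PosDef) : gm 0 A B = A := by
  rw [gm, mpow_zero (inner_posDef hA hB), mul_one, mpow_add hA]
  norm_num
  exact mpow_one hA

lemma gm_one (hA : A.PosDef) (hB : B.PosDef) : gm 1 A B = B := by
  rw [gm, mpow_one (inner_posDef hA hB)]
  calc mpow A (1/2) * (mpow A (-(1/2)) * B * mpow A (-(1/2))) * mpow A (1/2)
      = (mpow A (1/2) * mpow A (-(1/2))) * B * (mpow A (-(1/2)) * mpow A (1/2)) := by
        noncomm_ring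
  _ = B := by
      rw [mpow_add hA, mpow_add hA]
      norm_num
      rw [mpow_zero hA, one_mul, mul_one]

lemma gm_geodesic (hX : X.PosDef) (hY : Y.PosDef) (s u t v : ℝ)
    (hv : v = (1-t)*s + t*u) :
    gm t (gm s X Y) (gm u X Y) = gm v X Y := by
  have hMP : (mpow X (-(1/2)) * Y * mpow X (-(1/2))).PosDef := inner_posDef hX hY
  have hgm_any : ∀ w : ℝ, gm w X Y
      = mpow X (1/2) * mpow (mpow X (-(1/2)) * Y * mpow X (-(1/2))) w * (mpow X (1/2))ᴴ := by
    intro w; rw [mpow_herm hX]; rfl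
  rw [hgm_any s, hgm_any u, hgm_any v,
    gm_conj t (mpow_posDef hMP s) (mpow_posDef hMP u) (mpow_posDef hX _).isUnit,
    gm_mpow hMP s u t v hv]

lemma gm_symm (hX : X.PosDef) (hY : Y.PosDef) (t : ℝ) : gm (1-t) Y X = gm t X Y := by
  calc gm (1-t) Y X = gm (1-t) (gm 1 X Y) (gm 0 X Y) := by rw [gm_zero hX hY, gm_one hX hY]
  _ = gm t X Y := gm_geodesic hX hY 1 0 (1-t) t (by ring)




lemma loewner_refl (X : Matrix (Fin n) (Fin n) ℂ) : loewnerLE X X := by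
  rw [loewnerLE, sub_self]; exact Matrix.PosSemidef.zero

lemma loewner_trans (h1 : loewnerLE X Y) (h2 : loewnerLE Y Z) : loewnerLE X Z := by
  rw [loewnerLE] at *
  have := h2.add h1
  rwa [sub_add_sub_cancel] at this

lemma loewner_conj (S : Matrix (Fin n) (Fin n) ℂ) (h : loewnerLE X Y) :
    loewnerLE (S * X * Sᴴ) (S * Y * Sᴴ) := by
  rw [loewnerLE] at *
  have h9 : S * Y * Sᴴ - S * X * Sᴴ = S * (Y - X) * Sᴴ := by noncomm_ring
  rw [h9]
  exact h.mul_mul_conjTranspose_same S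

lemma mulVec_ne_zero {S : Matrix (Fin n) (Fin n) ℂ} (hS : IsUnit S) {v : Fin n → ℂ}
    (hv : v ≠ 0) : S *ᵥ v ≠ 0 := by
  intro h
  apply hv
  have hSd := (Matrix.isUnit_iff_isUnit_det _).mp hS
  have := congrArg (fun z => S⁻¹ *ᵥ z) h
  simpa [Matrix.mulVec_mulVec, Matrix.nonsing_inv_mul _ hSd] using this

lemma herm_shift (hH : M.IsHermitian) (x y : Fin n → ℂ) :
    star x ⬝ᵥ (M *ᵥ y) = star (M *ᵥ x) ⬝ᵥ y := by
  rw [Matrix.star_mulVec, hH.eq, ← Matrix.dotProduct_mulVec]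

/-- eigenvalues of a positive-definite `T` with `T ≤ 1` are at most 1; stated via
the quadratic form hypothesis. -/
theorem sqrt_mono (hM : M.PosDef) (hN : N.PosDef) (h : loewnerLE M N) :
    loewnerLE (mpow M (1/2)) (mpow N (1/2)) := by
  classical
  set Mh := mpow M (1/2) with hMh
  set Np := mpow N (1/4) with hNp
  set Nq := mpow N (-(1/4)) with hNq
  have hMhP : Mh.PosDef := mpow_posDef hM _
  have hNpP : Np.PosDef := mpow_posDef hN _
  have hNqP : Nq.PosDef := mpow_posDef hN _
  have hNpNq : Np * Nq = 1 := by
    rw [hNp, hNq, mpow_add hN]; norm_num; exact mpow_zero hN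
  have hNqNp : Nq * Np = 1 := by
    rw [hNp, hNq, mpow_add hN]; norm_num; exact mpow_zero hN
  set T := Nq * Mh * Nq with hT
  have hTP : T.PosDef := by
    have h9 : T = Nq * Mh * Nqᴴ := by rw [mpow_herm hN]
    rw [h9]; exact posDef_conj hMhP hNqP.isUnit
  -- each eigenvalue of T is at most 1
  have heig : ∀ x ∈ spectrum ℝ T, x ≤ 1 := by
    intro x hx
    rw [hTP.isHermitian.spectrum_real_eq_range_eigenvalues] at hx
    obtain ⟨j, rfl⟩ := hx
    set μ := hTP.isHermitian.eigenvalues j with hμ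
    set v := (WithLp.equiv 2 ((i : Fin n) → ℂ)) (hTP.isHermitian.eigenvectorBasis j) with hv
    have hv0 : v ≠ 0 := by
      simp only [hv, ne_eq]
      intro hcontra
      exact hTP.isHermitian.eigenvectorBasis.orthonormal.ne_zero j (by
        apply (WithLp.equiv 2 ((i : Fin n) → ℂ)).injective
        simpa using hcontra)
    have hTv : T *ᵥ v = (μ : ℂ) • v := by
      have := hTP.isHermitian.mulVec_eigenvectorBasis j
      change T *ᵥ v = μ • v at this
      rw [this]
      funext i
      simp [Complex.real_smul]
    set w := Nq *ᵥ v with hw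
    set z := Np *ᵥ v with hz
    have hz0 : z ≠ 0 := mulVec_ne_zero hNpP.isUnit hv0
    have hMhNq : Mh * Nq = Np * T := by
      rw [hT, ← mul_assoc, ← mul_assoc, hNpNq, one_mul]
    have hMhw : Mh *ᵥ w = (μ : ℂ) • z := by
      rw [hw, Matrix.mulVec_mulVec, hMhNq, ← Matrix.mulVec_mulVec, hTv,
        Matrix.mulVec_smul, hz]
    have hNh : mpow N (1/2) * Nq = Np := by
      rw [hNq, hNp, mpow_add hN]; norm_num
    have hNhw : mpow N (1/2) *ᵥ w = z := by
      rw [hw, Matrix.mulVec_mulVec, hNh, hz]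
    have hMsq : Mh * Mh = M := by
      rw [hMh, mpow_add hM]; norm_num; exact mpow_one hM
    have hMw : M *ᵥ w = Mh *ᵥ (Mh *ᵥ w) := by
      conv_rhs => rw [Matrix.mulVec_mulVec, hMsq]
    have hNsq : mpow N (1/2) * mpow N (1/2) = N := by
      rw [mpow_add hN]; norm_num; exact mpow_one hN
    have hNw : N *ᵥ w = mpow N (1/2) *ᵥ (mpow N (1/2) *ᵥ w) := by
      conv_rhs => rw [Matrix.mulVec_mulVec, hNsq]
    have ha : star w ⬝ᵥ (M *ᵥ w) = ((μ : ℂ) * (μ : ℂ)) * (star z ⬝ᵥ z) := by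
      rw [hMw, herm_shift hMhP.isHermitian, hMhw]
      rw [star_smul, smul_dotProduct, dotProduct_smul]
      simp [Complex.conj_ofReal]
      ring
    have hb : star w ⬝ᵥ (N *ᵥ w) = star z ⬝ᵥ z := by
      rw [hNw, herm_shift (mpow_posDef hN (1/2)).isHermitian, hNhw]
    have hab : star w ⬝ᵥ (M *ᵥ w) ≤ star w ⬝ᵥ (N *ᵥ w) := by
      have := h.dotProduct_mulVec_nonneg w
      rw [Matrix.sub_mulVec, dotProduct_sub] at this
      exact sub_nonneg.mp this
    have hq : (0 : ℂ) < star z ⬝ᵥ z := dotProduct_star_self_pos_iff.mpr hz0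
    rw [ha, hb] at hab
    -- extract the real inequality
    have hqre : 0 < (star z ⬝ᵥ z).re := (Complex.lt_def.mp hq).1
    have hqim : (star z ⬝ᵥ z).im = 0 := (Complex.lt_def.mp hq).2.symm
    have hre : (μ * μ) * (star z ⬝ᵥ z).re ≤ (star z ⬝ᵥ z).re := by
      have := (Complex.le_def.mp hab).1
      simpa [Complex.mul_re, hqim] using this
    have hμ2 : μ * μ ≤ 1 := by
      by_contra hgt
      push_neg at hgt
      nlinarith
    nlinarith [sq_nonneg (μ - 1)]
  -- 1 - T is PSD
  have hT1 : loewnerLE T 1 := by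
    have hcfc : cfc (fun x : ℝ => 1 - x) T = 1 - T := by
      rw [cfc_sub (fun _ : ℝ => (1:ℝ)) (fun x : ℝ => x) T (contOn _ _) (contOn _ _),
        cfc_const 1 T hTP.isHermitian.isSelfAdjoint, cfc_id' ℝ T hTP.isHermitian.isSelfAdjoint,
        _root_.map_one]
    rw [loewnerLE, ← hcfc]
    exact cfc_posSemidef hTP.isHermitian _ (fun x hx => by linarith [heig x hx])
  -- conjugate by N^{1/4}
  have hconj := loewner_conj Np hT1
  have e1 : Np * T * Npᴴ = Mh := by
    rw [mpow_herm hN]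
    calc Np * T * Np = (Np * Nq) * Mh * (Nq * Np) := by rw [hT]; noncomm_ring
    _ = Mh := by rw [hNpNq, hNqNp, one_mul, mul_one]
  have e2 : Np * 1 * Npᴴ = mpow N (1/2) := by
    rw [mpow_herm hN, mul_one, hNp, mpow_add hN]
    norm_num
  rw [e1, e2] at hconj
  exact hconj



-- gm is monotone in the second argument at parameter 1/2
lemma gm_mono_right_half (hX : X.PosDef) (hY : Y.PosDef) (hY' : Y'.PosDef)
    (h : loewnerLE Y Y') : loewnerLE (gm (1/2) X Y) (gm (1/2) X Y') := by
  have hXq := mpow_posDef hX (-(1/2))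
  have hXh := mpow_posDef hX (1/2)
  have hM : (mpow X (-(1/2)) * Y * mpow X (-(1/2))).PosDef := inner_posDef hX hY
  have hM' : (mpow X (-(1/2)) * Y' * mpow X (-(1/2))).PosDef := inner_posDef hX hY'
  have hinner : loewnerLE (mpow X (-(1/2)) * Y * mpow X (-(1/2)))
      (mpow X (-(1/2)) * Y' * mpow X (-(1/2))) := by
    have := loewner_conj (mpow X (-(1/2))) h
    rwa [mpow_herm hX] at this
  have hs := sqrt_mono hM hM' hinner
  have := loewner_conj (mpow X (1/2)) hs
  rwa [mpow_herm hX] at this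

lemma gm_half_comm (hX : X.PosDef) (hY : Y.PosDef) : gm (1/2) X Y = gm (1/2) Y X := by
  have := gm_symm hY hX (1/2)
  norm_num at this
  exact this

lemma gm_mono_left_half (hX : X.PosDef) (hX' : X'.PosDef) (hY : Y.PosDef)
    (h : loewnerLE X X') : loewnerLE (gm (1/2) X Y) (gm (1/2) X' Y) := by
  rw [gm_half_comm hX hY, gm_half_comm hX' hY]
  exact gm_mono_right_half hY hX hX' h

-- Löwner-Heinz for dyadic exponents
lemma mpow_mono_mid {s u : ℝ}
    (hs : ∀ (M N : Matrix (Fin n) (Fin n) ℂ), M.PosDef → N.PosDef →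
      loewnerLE M N → loewnerLE (mpow M s) (mpow N s))
    (hu : ∀ (M N : Matrix (Fin n) (Fin n) ℂ), M.PosDef → N.PosDef →
      loewnerLE M N → loewnerLE (mpow M u) (mpow N u)) :
    ∀ (M N : Matrix (Fin n) (Fin n) ℂ), M.PosDef → N.PosDef →
      loewnerLE M N → loewnerLE (mpow M ((s+u)/2)) (mpow N ((s+u)/2)) := by
  intro M N hM hN h
  have e1 : gm (1/2) (mpow M s) (mpow M u) = mpow M ((s+u)/2) :=
    gm_mpow hM s u (1/2) ((s+u)/2) (by ring)
  have e2 : gm (1/2) (mpow N s) (mpow N u) = mpow N ((s+u)/2) :=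
    gm_mpow hN s u (1/2) ((s+u)/2) (by ring)
  rw [← e1, ← e2]
  exact loewner_trans
    (gm_mono_left_half (mpow_posDef hM s) (mpow_posDef hN s) (mpow_posDef hM u)
      (hs M N hM hN h))
    (gm_mono_right_half (mpow_posDef hN s) (mpow_posDef hM u) (mpow_posDef hN u)
      (hu M N hM hN h))

lemma mpow_mono_dyadic (m : ℕ) : ∀ k : ℕ, k ≤ 2^m →
    ∀ (M N : Matrix (Fin n) (Fin n) ℂ), M.PosDef → N.PosDef →
      loewnerLE M N → loewnerLE (mpow M ((k : ℝ)/2^m)) (mpow N ((k : ℝ)/2^m)) := by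
  induction m with
  | zero =>
    intro k hk M N hM hN h
    interval_cases k
    · simpa [mpow_zero hM, mpow_zero hN] using loewner_refl (1 : Matrix (Fin n) (Fin n) ℂ)
    · simpa [mpow_one hM, mpow_one hN] using h
  | succ m ih =>
    intro k hk M N hM hN h
    rcases Nat.even_or_odd k with ⟨j, hj⟩ | ⟨j, hj⟩
    · have hj' : j ≤ 2^m := by omega
      have : ((k : ℝ)/2^(m+1)) = (j : ℝ)/2^m := by
        subst hj; push_cast; ring
      rw [this]
      exact ih j hj' M N hM hN h
    · have hj1 : j ≤ 2^m := by omega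
      have hj2 : j + 1 ≤ 2^m := by omega
      have : ((k : ℝ)/2^(m+1)) = ((j : ℝ)/2^m + ((j+1 : ℕ) : ℝ)/2^m)/2 := by
        subst hj; push_cast; ring
      rw [this]
      exact mpow_mono_mid (fun M N hM hN h => ih j hj1 M N hM hN h)
        (fun M N hM hN h => ih (j+1) hj2 M N hM hN h) M N hM hN h

-- ε-perturbation lemma
lemma algebraMap_eq_smul_one' (ε : ℝ) :
    algebraMap ℝ (Matrix (Fin n) (Fin n) ℂ) ε = (ε : ℂ) • (1 : Matrix (Fin n) (Fin n) ℂ) := by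
  rw [IsScalarTower.algebraMap_apply ℝ ℂ (Matrix (Fin n) (Fin n) ℂ),
    Algebra.algebraMap_eq_smul_one]
  norm_num

lemma psd_of_forall_eps {X : Matrix (Fin n) (Fin n) ℂ}
    (h : ∀ ε : ℝ, 0 < ε → (X + algebraMap ℝ (Matrix (Fin n) (Fin n) ℂ) ε).PosSemidef) :
    X.PosSemidef := by
  have halg : ∀ ε : ℝ, algebraMap ℝ (Matrix (Fin n) (Fin n) ℂ) ε
      = (ε : ℂ) • (1 : Matrix (Fin n) (Fin n) ℂ) := algebraMap_eq_smul_one'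
  rw [Matrix.posSemidef_iff_dotProduct_mulVec]
  constructor
  · have h1 := (h 1 one_pos).1
    have hH : ((1:ℝ) : ℂ) • (1 : Matrix (Fin n) (Fin n) ℂ) = 1 := by norm_num
    have := h1
    rw [halg 1, hH] at this
    have h2 : (1 : Matrix (Fin n) (Fin n) ℂ).IsHermitian := Matrix.isHermitian_one
    simpa using this.sub h2
  · intro x
    set q := star x ⬝ᵥ (X *ᵥ x) with hq
    set c := star x ⬝ᵥ x with hc
    have hcnn : (0:ℂ) ≤ c := by
      rcases eq_or_ne x 0 with rfl | hx
      · simp [hc]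
      · exact le_of_lt (dotProduct_star_self_pos_iff.mpr hx)
    have key : ∀ ε : ℝ, 0 < ε → 0 ≤ q + (ε : ℂ) * c := by
      intro ε hε
      have := (h ε hε).dotProduct_mulVec_nonneg x
      rw [Matrix.add_mulVec, dotProduct_add, halg ε, Matrix.smul_mulVec,
        Matrix.one_mulVec, dotProduct_smul, smul_eq_mul] at this
      exact this
    have hcim : c.im = 0 := ((Complex.le_def.mp hcnn).2).symm
    have hcre : 0 ≤ c.re := (Complex.le_def.mp hcnn).1
    have him : q.im = 0 := by
      have h1 := (Complex.le_def.mp (key 1 one_pos)).2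
      simp [Complex.add_im, Complex.mul_im, hcim] at h1
      linarith [h1]
    have hre : 0 ≤ q.re := by
      by_contra hlt
      push_neg at hlt
      rcases eq_or_lt_of_le hcre with hc0 | hc0
      · have := (Complex.le_def.mp (key 1 one_pos)).1
        simp [Complex.add_re, Complex.mul_re, ← hc0, hcim] at this
        linarith
      · have hcne : c.re ≠ 0 := ne_of_gt hc0
        obtain ⟨ε, hεpos, hεc⟩ : ∃ ε : ℝ, 0 < ε ∧ ε * c.re = -q.re/2 :=
          ⟨-q.re / (2 * c.re), div_pos (by linarith) (by linarith), by field_simp⟩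
        have hkey := (Complex.le_def.mp (key ε hεpos)).1
        simp only [Complex.add_re, Complex.mul_re, Complex.ofReal_re, Complex.ofReal_im,
          Complex.zero_re, hcim, mul_zero, zero_mul, sub_zero] at hkey
        rw [hεc] at hkey
        linarith
    rw [Complex.le_def]
    constructor
    · simpa using hre
    · simpa using him.symm




lemma cfc_eps_bound (hA : A.PosDef) (s t ε : ℝ)
    (hb : ∀ x ∈ spectrum ℝ A, |x ^ s - x ^ t| ≤ ε) :
    (mpow A t - mpow A s + algebraMap ℝ (Matrix (Fin n) (Fin n) ℂ) ε).PosSemidef := by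
  have ha : IsSelfAdjoint A := hA.isHermitian
  have hrep : cfc (fun x : ℝ => (x ^ t - x ^ s) + ε) A
      = mpow A t - mpow A s + algebraMap ℝ (Matrix (Fin n) (Fin n) ℂ) ε := by
    rw [cfc_add (a := A) _ _ (contOn _ _) (contOn _ _),
      cfc_sub (a := A) _ _ (contOn _ _) (contOn _ _), cfc_const ε A ha]
    rfl
  rw [← hrep]
  apply cfc_posSemidef hA.isHermitian
  intro x hx
  have := hb x hx
  rw [abs_le] at this
  linarith [this.1, this.2]

theorem mpow_mono (hM : M.PosDef) (hN : N.PosDef) (h : loewnerLE M N) {t : ℝ}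
    (ht : t ∈ Set.Icc (0:ℝ) 1) : loewnerLE (mpow M t) (mpow N t) := by
  rw [loewnerLE]
  apply psd_of_forall_eps
  intro ε hε
  have hSfin : (spectrum ℝ M ∪ spectrum ℝ N).Finite :=
    (Matrix.finite_real_spectrum (A := M)).union (Matrix.finite_real_spectrum (A := N))
  have hev : ∀ᶠ s' in 𝓝 t, ∀ x ∈ spectrum ℝ M ∪ spectrum ℝ N, |x ^ s' - x ^ t| ≤ ε/2 := by
    rw [Filter.eventually_all_finite hSfin]
    intro x hx
    have hx0 : 0 < x := by
      rcases hx with hx | hx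
      · exact spec_pos hM x hx
      · exact spec_pos hN x hx
    have hcont : ContinuousAt (fun s' : ℝ => x ^ s') t :=
      Real.continuousAt_const_rpow hx0.ne'
    have hball : ∀ᶠ s' in 𝓝 t, x ^ s' ∈ Metric.closedBall (x ^ t) (ε/2) :=
      hcont (Metric.closedBall_mem_nhds _ (by positivity))
    filter_upwards [hball] with s' hs'
    rw [Metric.mem_closedBall, Real.dist_eq] at hs'
    exact hs'
  rw [Metric.eventually_nhds_iff] at hev
  obtain ⟨δ, hδ, hδP⟩ := hev
  obtain ⟨m, hm⟩ := exists_pow_lt_of_lt_one hδ (show (1:ℝ)/2 < 1 by norm_num)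
  set k := ⌊t * 2^m⌋₊ with hk
  have h2m : (0:ℝ) < 2^m := by positivity
  have hkle : (k:ℝ) ≤ t * 2^m := Nat.floor_le (mul_nonneg ht.1 (le_of_lt h2m))
  have hklt : t * 2^m < k + 1 := Nat.lt_floor_add_one _
  have hk2m : k ≤ 2^m := by
    have h1 : (k:ℝ) ≤ (2:ℝ)^m := le_trans hkle (by nlinarith [ht.2])
    have h2 : ((2^m : ℕ) : ℝ) = (2:ℝ)^m := by push_cast; ring
    exact_mod_cast h1.trans_eq h2.symm
  have hds : dist ((k:ℝ)/2^m) t < δ := by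
    rw [Real.dist_eq, abs_lt]
    have hle : (k:ℝ)/2^m ≤ t := by
      rw [div_le_iff₀ h2m]; linarith
    have h5 : ((1:ℝ)/2)^m = 1/2^m := by rw [div_pow, one_pow]
    have h4 : ((k:ℝ)+1)/2^m - (k:ℝ)/2^m = 1/2^m := by rw [← sub_div, add_sub_cancel_left]
    have hlt : t - (k:ℝ)/2^m < (1/2)^m := by
      have h6 : t < ((k:ℝ)+1)/2^m := by
        rw [lt_div_iff₀ h2m]; linarith
      rw [h5]
      linarith
    constructor
    · linarith
    · linarith
  have hbound := hδP hds
  have hdy := mpow_mono_dyadic m k hk2m M N hM hN h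
  have p1 := cfc_eps_bound hN ((k:ℝ)/2^m) t (ε/2) (fun x hx => hbound x (Or.inr hx))
  have p3 := cfc_eps_bound hM t ((k:ℝ)/2^m) (ε/2)
    (fun x hx => by rw [abs_sub_comm]; exact hbound x (Or.inl hx))
  have p2 : (mpow N ((k:ℝ)/2^m) - mpow M ((k:ℝ)/2^m)).PosSemidef := hdy
  have hsum := (p1.add p2).add p3
  have heq : mpow N t - mpow N ((k:ℝ)/2^m) + algebraMap ℝ (Matrix (Fin n) (Fin n) ℂ) (ε/2)
      + (mpow N ((k:ℝ)/2^m) - mpow M ((k:ℝ)/2^m))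
      + (mpow M ((k:ℝ)/2^m) - mpow M t + algebraMap ℝ (Matrix (Fin n) (Fin n) ℂ) (ε/2))
      = mpow N t - mpow M t + algebraMap ℝ (Matrix (Fin n) (Fin n) ℂ) ε := by
    have hmap : algebraMap ℝ (Matrix (Fin n) (Fin n) ℂ) (ε/2)
        + algebraMap ℝ (Matrix (Fin n) (Fin n) ℂ) (ε/2)
        = algebraMap ℝ (Matrix (Fin n) (Fin n) ℂ) ε := by
      rw [← map_add]; norm_num
    rw [← hmap]
    abel
  rwa [heq] at hsum

theorem gm_mono_right {t : ℝ} (ht : t ∈ Set.Icc (0:ℝ) 1) (hX : X.PosDef) (hY : Y.PosDef)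
    (hY' : Y'.PosDef) (h : loewnerLE Y Y') : loewnerLE (gm t X Y) (gm t X Y') := by
  have hM : (mpow X (-(1/2)) * Y * mpow X (-(1/2))).PosDef := inner_posDef hX hY
  have hM' : (mpow X (-(1/2)) * Y' * mpow X (-(1/2))).PosDef := inner_posDef hX hY'
  have hinner : loewnerLE (mpow X (-(1/2)) * Y * mpow X (-(1/2)))
      (mpow X (-(1/2)) * Y' * mpow X (-(1/2))) := by
    have := loewner_conj (mpow X (-(1/2))) h
    rwa [mpow_herm hX] at this
  have hs := mpow_mono hM hM' hinner ht
  have := loewner_conj (mpow X (1/2)) hs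
  rwa [mpow_herm hX] at this

theorem gm_mono_left {t : ℝ} (ht : t ∈ Set.Icc (0:ℝ) 1) (hX : X.PosDef) (hX' : X'.PosDef)
    (hY : Y.PosDef) (h : loewnerLE X X') : loewnerLE (gm t X Y) (gm t X' Y) := by
  rw [← gm_symm hX hY t, ← gm_symm hX' hY t]
  exact gm_mono_right ⟨by linarith [ht.2], by linarith [ht.1]⟩ hY hX hX' h


lemma posDef_smul_real {c : ℝ} (hc : 0 < c) (hA : A.PosDef) : (c • A).PosDef := by
  rw [Matrix.posDef_iff_dotProduct_mulVec]
  constructor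
  · have h1 : (c • A)ᴴ = c • Aᴴ := by
      rw [Matrix.conjTranspose_smul, star_trivial]
    rw [Matrix.IsHermitian, h1, hA.isHermitian.eq]
  · intro x hx
    have h1 : (c • A) *ᵥ x = c • (A *ᵥ x) := Matrix.smul_mulVec c A x
    rw [h1, dotProduct_smul]
    have h2 : c • (star x ⬝ᵥ (A *ᵥ x)) = (c : ℂ) * (star x ⬝ᵥ (A *ᵥ x)) := by
      rw [Complex.real_smul]
    rw [h2]
    exact mul_pos (by exact_mod_cast hc) (hA.dotProduct_mulVec_pos hx)

lemma am_posDef {t : ℝ} (ht : t ∈ Set.Icc (0:ℝ) 1) (hA : A.PosDef) (hB : B.PosDef) :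
    (am t A B).PosDef := by
  rcases eq_or_lt_of_le ht.1 with h0 | h0
  · have he : am t A B = A := by rw [am, ← h0]; simp
    rw [he]; exact hA
  rcases eq_or_lt_of_le ht.2 with h1 | h1
  · have he : am t A B = B := by rw [am, h1]; simp
    rw [he]; exact hB
  · exact (posDef_smul_real (by linarith) hA).add (posDef_smul_real h0 hB)

lemma am_key_id (α β : ℝ) (A B : Matrix (Fin n) (Fin n) ℂ) :
    am α (am β (am α A B) A) (am β (am α A B) B) = am α A B := by
  unfold am
  module

lemma cfc_f_posDef {f : ℝ → ℝ} (hf_pos : ∀ x ∈ Set.Ioi (0 : ℝ), 0 < f x) (hA : A.PosDef) :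
    (cfc f A).PosDef :=
  cfc_posDef hA f (fun x hx => hf_pos x (Set.mem_Ioi.mpr (spec_pos hA x hx)))

end LogCvxAux

open LogCvxAux in
/-- Refined operator log-convexity inequality:
`f(A ∇_α B) ≤ f((A ∇_α B) ∇_β A) ♯_α f((A ∇_α B) ∇_β B) ≤ f(A) ♯_α f(B)`. -/
theorem stmt0 {n : ℕ} (A B : Matrix (Fin n) (Fin n) ℂ) (hA : A.PosDef) (hB : B.PosDef)
    (α β : ℝ) (hα : α ∈ Set.Icc (0 : ℝ) 1) (hβ : β ∈ Set.Icc (0 : ℝ) 1)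
    (f : ℝ → ℝ) (hf_cont : ContinuousOn f (Set.Ioi 0))
    (hf_pos : ∀ x ∈ Set.Ioi (0 : ℝ), 0 < f x)
    (hf_logcvx : ∀ X Y : Matrix (Fin n) (Fin n) ℂ, X.PosDef → Y.PosDef →
      ∀ t ∈ Set.Icc (0 : ℝ) 1, loewnerLE (cfc f (am t X Y)) (gm t (cfc f X) (cfc f Y))) :
    loewnerLE (cfc f (am α A B))
      (gm α (cfc f (am β (am α A B) A)) (cfc f (am β (am α A B) B))) ∧
    loewnerLE (gm α (cfc f (am β (am α A B) A)) (cfc f (am β (am α A B) B)))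
      (gm α (cfc f A) (cfc f B)) := by
  have hC : (am α A B).PosDef := am_posDef hα hA hB
  have hCA : (am β (am α A B) A).PosDef := am_posDef hβ hC hA
  have hCB : (am β (am α A B) B).PosDef := am_posDef hβ hC hB
  have hfA : (cfc f A).PosDef := cfc_f_posDef hf_pos hA
  have hfB : (cfc f B).PosDef := cfc_f_posDef hf_pos hB
  have hfC : (cfc f (am α A B)).PosDef := cfc_f_posDef hf_pos hC
  have hP : (cfc f (am β (am α A B) A)).PosDef := cfc_f_posDef hf_pos hCA
  have hQ : (cfc f (am β (am α A B) B)).PosDef := cfc_f_posDef hf_pos hCB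
  have hP' : (gm β (cfc f (am α A B)) (cfc f A)).PosDef := gm_posDef β hfC hfA
  have hQ' : (gm β (cfc f (am α A B)) (cfc f B)).PosDef := gm_posDef β hfC hfB
  have hG : (gm α (cfc f A) (cfc f B)).PosDef := gm_posDef α hfA hfB
  have hGA : (gm β (gm α (cfc f A) (cfc f B)) (cfc f A)).PosDef := gm_posDef β hG hfA
  have hGB : (gm β (gm α (cfc f A) (cfc f B)) (cfc f B)).PosDef := gm_posDef β hG hfB
  constructor
  · have h1 := hf_logcvx (am β (am α A B) A) (am β (am α A B) B) hCA hCB α hα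
    rwa [am_key_id α β A B] at h1
  · have hPP' := hf_logcvx (am α A B) A hC hA β hβ
    have hQQ' := hf_logcvx (am α A B) B hC hB β hβ
    have hfCG := hf_logcvx A B hA hB α hα
    have s1 : loewnerLE (gm α (cfc f (am β (am α A B) A)) (cfc f (am β (am α A B) B)))
        (gm α (gm β (cfc f (am α A B)) (cfc f A)) (cfc f (am β (am α A B) B))) :=
      gm_mono_left hα hP hP' hQ hPP'
    have s2 : loewnerLE (gm α (gm β (cfc f (am α A B)) (cfc f A)) (cfc f (am β (am α A B) B)))
        (gm α (gm β (cfc f (am α A B)) (cfc f A)) (gm β (cfc f (am α A B)) (cfc f B))) :=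
      gm_mono_right hα hP' hQ hQ' hQQ'
    have s3 : loewnerLE (gm β (cfc f (am α A B)) (cfc f A))
        (gm β (gm α (cfc f A) (cfc f B)) (cfc f A)) :=
      gm_mono_left hβ hfC hG hfA hfCG
    have s4 : loewnerLE (gm β (cfc f (am α A B)) (cfc f B))
        (gm β (gm α (cfc f A) (cfc f B)) (cfc f B)) :=
      gm_mono_left hβ hfC hG hfB hfCG
    have s5 : loewnerLE
        (gm α (gm β (cfc f (am α A B)) (cfc f A)) (gm β (cfc f (am α A B)) (cfc f B)))
        (gm α (gm β (gm α (cfc f A) (cfc f B)) (cfc f A)) (gm β (cfc f (am α A B)) (cfc f B))) :=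
      gm_mono_left hα hP' hGA hQ' s3
    have s6 : loewnerLE
        (gm α (gm β (gm α (cfc f A) (cfc f B)) (cfc f A)) (gm β (cfc f (am α A B)) (cfc f B)))
        (gm α (gm β (gm α (cfc f A) (cfc f B)) (cfc f A))
          (gm β (gm α (cfc f A) (cfc f B)) (cfc f B))) :=
      gm_mono_right hα hGA hQ' hGB s4
    have e1 : gm β (gm α (cfc f A) (cfc f B)) (cfc f A)
        = gm ((1-β)*α + β*0) (cfc f A) (cfc f B) := by
      have h := gm_geodesic hfA hfB α 0 β ((1-β)*α + β*0) rfl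
      rwa [gm_zero hfA hfB] at h
    have e2 : gm β (gm α (cfc f A) (cfc f B)) (cfc f B)
        = gm ((1-β)*α + β*1) (cfc f A) (cfc f B) := by
      have h := gm_geodesic hfA hfB α 1 β ((1-β)*α + β*1) rfl
      rwa [gm_one hfA hfB] at h
    have e3 : gm α (gm β (gm α (cfc f A) (cfc f B)) (cfc f A))
        (gm β (gm α (cfc f A) (cfc f B)) (cfc f B)) = gm α (cfc f A) (cfc f B) := by
      rw [e1, e2]
      exact gm_geodesic hfA hfB ((1-β)*α + β*0) ((1-β)*α + β*1) α α (by ring)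
    rw [← e3]
    exact loewner_trans s1 (loewner_trans s2 (loewner_trans s5 s6))
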